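/- Exponential-integral estimate: for every integer B ≥ 1 and every real k ≥ 1, with a = 2^B, ∫₁^k a^s / √s ds ≤ 3 a^k / (B √k). -/

import Mathlib

open Real intervalIntegral

/-- **Exponential-integral estimate.** For every integer `B ≥ 1` and real `k ≥ 1`, with
`a = 2^B`, `∫₁^k a^s / √s ds ≤ 3 a^k / (B √k)`. -/
theorem stmt_18 (B : ℕ) (hB : 1 ≤ B) (k : ℝ) (hk : 1 ≤ k) :
    (∫ s in (1 : ℝ)..k, ((2 : ℝ) ^ B) ^ s / Real.sqrt s)
      ≤ 3 * ((2 : ℝ) ^ B) ^ k / (B * Real.sqrt k) := by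
  set a : ℝ := (2 : ℝ) ^ B with ha_def
  have ha1 : (1 : ℝ) < a := one_lt_pow₀ one_lt_two (by omega)
  have ha0 : (0 : ℝ) < a := by linarith
  set L : ℝ := Real.log a with hL_def
  have hL2 : Real.log 2 ≤ L := by
    rw [hL_def, ha_def, Real.log_pow]
    calc Real.log 2 = 1 * Real.log 2 := (one_mul _).symm
    _ ≤ (B : ℝ) * Real.log 2 := by
        apply mul_le_mul_of_nonneg_right _ (Real.log_nonneg one_le_two)
        exact_mod_cast hB
  have hLB : L = (B : ℝ) * Real.log 2 := by rw [hL_def, ha_def, Real.log_pow]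
  have hlog2 : 0.6931471803 < Real.log 2 := Real.log_two_gt_d9
  have hlog2' : Real.log 2 < 0.6931471808 := Real.log_two_lt_d9
  have hL0 : 0 < L := lt_of_lt_of_le (by linarith) hL2
  have hk0 : (0 : ℝ) < k := by linarith
  have hsk : 0 < Real.sqrt k := Real.sqrt_pos.2 hk0
  -- antiderivative
  set F : ℝ → ℝ := fun s => a ^ s * (1 / L + (k - s) / (2 * L) + 1 / (2 * L ^ 2)) / Real.sqrt k
    with hF_def
  have hderiv : ∀ s ∈ Set.uIcc (1 : ℝ) k,
      HasDerivAt F (a ^ s * (1 + (k - s) / 2) / Real.sqrt k) s := by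
    intro s _
    have h1 : HasDerivAt (fun x : ℝ => a ^ x) (a ^ s * L) s :=
      (Real.hasStrictDerivAt_const_rpow ha0 s).hasDerivAt
    have h2 : HasDerivAt (fun x : ℝ => 1 / L + (k - x) / (2 * L) + 1 / (2 * L ^ 2))
        (-(1 / (2 * L))) s := by
      have : HasDerivAt (fun x : ℝ => 1 / L + (k - x) / (2 * L) + 1 / (2 * L ^ 2))
          (0 + (0 - 1) / (2 * L) + 0) s := by
        exact ((hasDerivAt_const s (1 / L)).add
          (((hasDerivAt_const s k).sub (hasDerivAt_id s)).div_const (2 * L))).add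
          (hasDerivAt_const s (1 / (2 * L ^ 2)))
      convert this using 1
      ring
    have h3 := (h1.mul h2).div_const (Real.sqrt k)
    refine h3.congr_deriv ?_
    have hL0' : L ≠ 0 := ne_of_gt hL0
    field_simp
    ring
  -- continuity of the derivative integrand
  have hcont : ContinuousOn (fun s => a ^ s * (1 + (k - s) / 2) / Real.sqrt k)
      (Set.uIcc (1 : ℝ) k) := by
    apply ContinuousOn.div_const
    have hca : Continuous fun x : ℝ => a ^ x :=
      continuous_iff_continuousAt.2 fun x => Real.continuousAt_const_rpow (ne_of_gt ha0)
    exact (hca.continuousOn).mul (by fun_prop)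
  have hint2 : IntervalIntegrable (fun s => a ^ s * (1 + (k - s) / 2) / Real.sqrt k)
      MeasureTheory.volume 1 k := hcont.intervalIntegrable
  have hint1 : IntervalIntegrable (fun s => a ^ s / Real.sqrt s)
      MeasureTheory.volume 1 k := by
    apply ContinuousOn.intervalIntegrable
    apply ContinuousOn.div
    · exact (continuous_iff_continuousAt.2 fun x =>
        Real.continuousAt_const_rpow (ne_of_gt ha0)).continuousOn
    · exact Real.continuous_sqrt.continuousOn
    · intro x hx
      rw [Set.uIcc_of_le hk] at hx
      exact ne_of_gt (Real.sqrt_pos.2 (by linarith [hx.1]))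
  have key : (∫ s in (1 : ℝ)..k, a ^ s / Real.sqrt s)
      ≤ ∫ s in (1 : ℝ)..k, a ^ s * (1 + (k - s) / 2) / Real.sqrt k := by
    apply intervalIntegral.integral_mono_on hk hint1 hint2
    intro s hs
    obtain ⟨hs1, hs2⟩ := hs
    have hs0 : 0 < s := by linarith
    have hss : 0 < Real.sqrt s := Real.sqrt_pos.2 hs0
    have has : 0 < a ^ s := Real.rpow_pos_of_pos ha0 s
    rw [div_le_div_iff₀ hss hsk]
    have hkey : Real.sqrt k ≤ Real.sqrt s * (1 + (k - s) / 2) := by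
      have hpoly : k ≤ s * (1 + (k - s) / 2) ^ 2 := by
        nlinarith [mul_nonneg (sub_nonneg.2 hs2) (sub_nonneg.2 hs1),
          mul_nonneg (mul_nonneg (sub_nonneg.2 hs2) (sub_nonneg.2 hs2)) hs0.le]
      have h0 : (0:ℝ) ≤ 1 + (k - s) / 2 := by linarith
      calc Real.sqrt k ≤ Real.sqrt (s * (1 + (k - s) / 2) ^ 2) := Real.sqrt_le_sqrt hpoly
        _ = Real.sqrt s * (1 + (k - s) / 2) := by
            rw [Real.sqrt_mul hs0.le, Real.sqrt_sq h0]
    calc a ^ s * Real.sqrt k ≤ a ^ s * (Real.sqrt s * (1 + (k - s) / 2)) :=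
          mul_le_mul_of_nonneg_left hkey has.le
    _ = a ^ s * (1 + (k - s) / 2) * Real.sqrt s := by ring
  have hFTC : (∫ s in (1 : ℝ)..k, a ^ s * (1 + (k - s) / 2) / Real.sqrt k) = F k - F 1 :=
    intervalIntegral.integral_eq_sub_of_hasDerivAt hderiv hint2
  have hF1 : 0 ≤ F 1 := by
    apply div_nonneg _ hsk.le
    apply mul_nonneg (Real.rpow_pos_of_pos ha0 1).le
    have : 0 ≤ (k - 1) / (2 * L) := div_nonneg (by linarith) (by positivity)
    positivity
  have hFk : F k ≤ 3 * a ^ k / ((B : ℝ) * Real.sqrt k) := by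
    rw [hF_def]
    simp only [sub_self, zero_div, add_zero]
    rw [div_le_div_iff₀ hsk (by positivity)]
    have has : 0 < a ^ k := Real.rpow_pos_of_pos ha0 k
    have hB1 : (1 : ℝ) ≤ (B : ℝ) := by exact_mod_cast hB
    have hcoef : (1 / L + (1 / (2 * L ^ 2))) * (B : ℝ) ≤ 3 := by
      rw [hLB]
      have hB0 : (0 : ℝ) < (B : ℝ) := by linarith
      rw [div_add_div _ _ (by positivity) (by positivity)]
      rw [div_mul_eq_mul_div, div_le_iff₀ (by positivity)]
      have hq : (1:ℝ) ≤ 2 * Real.log 2 * (3 * Real.log 2 - 1) := by nlinarith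
      have hq2 : (1:ℝ) ≤ 2 * (B:ℝ) * Real.log 2 * (3 * Real.log 2 - 1) := by
        nlinarith [mul_le_mul_of_nonneg_left hq (le_trans zero_le_one hB1)]
      have hBl : (0:ℝ) ≤ (B:ℝ) ^ 2 * Real.log 2 := by positivity
      nlinarith [mul_le_mul_of_nonneg_left hq2 hBl]
    calc a ^ k * (1 / L + (1 / (2 * L ^ 2))) * ((B : ℝ) * Real.sqrt k)
        = ((1 / L + (1 / (2 * L ^ 2))) * (B : ℝ)) * (a ^ k * Real.sqrt k) := by ring
      _ ≤ 3 * (a ^ k * Real.sqrt k) := by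
          apply mul_le_mul_of_nonneg_right hcoef (by positivity)
      _ = 3 * a ^ k * Real.sqrt k := by ring
  calc (∫ s in (1 : ℝ)..k, a ^ s / Real.sqrt s)
      ≤ F k - F 1 := by rw [← hFTC]; exact key
    _ ≤ F k := by linarith
    _ ≤ 3 * a ^ k / ((B : ℝ) * Real.sqrt k) := hFk
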